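/- Consider the relaxed MPCaC problem in ℝ³ with f(x) = x₁, one inequality constraint g(x) = (1 − x₁)³ + x₃² ≤ 0, no equality constraints, and α = 2 (so θ(y) = 1 − y₁ − y₂ − y₃). Then the pair (x*, y*) with x* = (1, 0, 0) and y* = (0, 1, 0) is AW-stationary. -/

import Mathlib

open Filter Topology
open scoped Classical

noncomputable section

/-- `ℝⁿ` as a Euclidean space. -/
abbrev E (n : ℕ) : Type := EuclideanSpace ℝ (Fin n)

/-- The constraint function `θ(y) = n − α − eᵀ y` of the relaxed MPCaC problem. -/
def theta {n : ℕ} (α : ℕ) (y : E n) : ℝ := (n : ℝ) - (α : ℝ) - ∑ i, y i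

/-- Feasibility for the relaxed MPCaC problem:
`g(x) ≤ 0, h(x) = 0, θ(y) ≤ 0, xᵢ yᵢ = 0, 0 ≤ yᵢ ≤ 1`. -/
def relFeas {n m p : ℕ} (g : E n → Fin m → ℝ) (h : E n → Fin p → ℝ) (α : ℕ)
    (x y : E n) : Prop :=
  (∀ i, g x i ≤ 0) ∧ (∀ j, h x j = 0) ∧ theta α y ≤ 0 ∧
  (∀ i, x i * y i = 0) ∧ (∀ i, 0 ≤ y i ∧ y i ≤ 1)

/-- `∇f(x) + Σᵢ λᵍᵢ ∇gᵢ(x) + Σⱼ λʰⱼ ∇hⱼ(x)`. -/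
def gradLx {n m p : ℕ} (f : E n → ℝ) (g : E n → Fin m → ℝ) (h : E n → Fin p → ℝ)
    (x : E n) (lg : Fin m → ℝ) (lh : Fin p → ℝ) : E n :=
  gradient f x + ∑ i, lg i • gradient (fun z => g z i) x
    + ∑ j, lh j • gradient (fun z => h z j) x

/-- `i ∈ I_{0+}(x̄,ȳ) ∪ I_{01}(x̄,ȳ)`, i.e. `x̄ᵢ = 0` and (`0 < ȳᵢ < 1` or `ȳᵢ = 1`). -/
def inI0p01 {n : ℕ} (xb yb : E n) (i : Fin n) : Prop :=
  xb i = 0 ∧ ((0 < yb i ∧ yb i < 1) ∨ yb i = 1)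

/-- Admissibility of the index set `I`: `I_{0+} ∪ I_{01} ⊆ I ⊆ I_0`. -/
def idxOK {n : ℕ} (xb yb : E n) (I : Finset (Fin n)) : Prop :=
  (∀ i, inI0p01 xb yb i → i ∈ I) ∧ (∀ i ∈ I, xb i = 0)

/-- Feasibility for the tightened problem `TNLP_I(x̄,ȳ)`:
`g(x) ≤ 0, h(x) = 0, θ(y) ≤ 0, xᵢ = 0 (i ∈ I), −yᵢ ≤ 0 (i ∈ I_{0+} ∪ I_{01}),`
`−yᵢ = 0 (i ∈ I_{00} ∪ I_{±0}), y − e ≤ 0`. Note `I_{00} ∪ I_{±0} = {i | ȳᵢ = 0}`. -/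
def tnlpFeas {n m p : ℕ} (g : E n → Fin m → ℝ) (h : E n → Fin p → ℝ) (α : ℕ)
    (xb yb : E n) (I : Finset (Fin n)) (x y : E n) : Prop :=
  (∀ i, g x i ≤ 0) ∧ (∀ j, h x j = 0) ∧ theta α y ≤ 0 ∧
  (∀ i ∈ I, x i = 0) ∧
  (∀ i, inI0p01 xb yb i → -(y i) ≤ 0) ∧
  (∀ i, yb i = 0 → -(y i) = 0) ∧
  (∀ i, y i - 1 ≤ 0)

/-- `W_I`-stationarity for the relaxed MPCaC problem (Definition 2.9 of the paper). -/
def WStat {n m p : ℕ} (f : E n → ℝ) (g : E n → Fin m → ℝ) (h : E n → Fin p → ℝ)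
    (α : ℕ) (xb yb : E n) (I : Finset (Fin n)) : Prop :=
  ∃ (lg : Fin m → ℝ) (lh : Fin p → ℝ) (lθ : ℝ) (lG : Fin n → ℝ) (lH lH' : Fin n → ℝ),
    (∀ i, 0 ≤ lg i) ∧ 0 ≤ lθ ∧ (∀ i, 0 ≤ lH' i) ∧
    gradLx f g h xb lg lh + ∑ i ∈ I, lG i • EuclideanSpace.single i 1 = 0 ∧
    (∀ i, -lθ - lH i + lH' i = 0) ∧
    (∑ i, lg i * g xb i) = 0 ∧
    lθ * theta α yb = 0 ∧
    (∀ i, inI0p01 xb yb i → lH i = 0) ∧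
    (∑ i, lH' i * (yb i - 1)) = 0

/-- Approximate weak (`AW`) stationarity for the relaxed MPCaC problem
(Definition 3.1 of the paper). -/
def AWStat {n m p : ℕ} (f : E n → ℝ) (g : E n → Fin m → ℝ) (h : E n → Fin p → ℝ)
    (α : ℕ) (xb yb : E n) : Prop :=
  ∃ (x y : ℕ → E n) (lg : ℕ → Fin m → ℝ) (lh : ℕ → Fin p → ℝ) (lθ : ℕ → ℝ)
    (lG : ℕ → E n) (lH lH' : ℕ → Fin n → ℝ),
    (∀ k i, 0 ≤ lg k i) ∧ (∀ k, 0 ≤ lθ k) ∧ (∀ k i, 0 ≤ lH' k i) ∧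
    Tendsto x atTop (𝓝 xb) ∧ Tendsto y atTop (𝓝 yb) ∧
    Tendsto (fun k => gradLx f g h (x k) (lg k) (lh k) + lG k) atTop (𝓝 0) ∧
    Tendsto (fun k i => -(lθ k) - lH k i + lH' k i) atTop (𝓝 (0 : Fin n → ℝ)) ∧
    (∀ i, Tendsto (fun k => min (-(g (x k) i)) (lg k i)) atTop (𝓝 0)) ∧
    Tendsto (fun k => min (-(theta α (y k))) (lθ k)) atTop (𝓝 0) ∧
    (∀ i, Tendsto (fun k => min |x k i| |lG k i|) atTop (𝓝 0)) ∧
    (∀ i, Tendsto (fun k => min (y k i) |lH k i|) atTop (𝓝 0)) ∧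
    (∀ i, Tendsto (fun k => min (1 - y k i) (lH' k i)) atTop (𝓝 0))

/-- Objective of the example: `f(x) = x₁`. -/
def fEx : E 3 → ℝ := fun x => x 0

/-- Inequality constraint of the example: `g(x) = (1 − x₁)³ + x₃² ≤ 0`. -/
def gEx : E 3 → Fin 1 → ℝ := fun x _ => (1 - x 0) ^ 3 + (x 2) ^ 2

/-- No equality constraints. -/
def hEx : E 3 → Fin 0 → ℝ := fun _ j => Fin.elim0 j

/-- `x* = (1, 0, 0)`. -/
def xStar : E 3 := !₂[1, 0, 0]

/-- `y* = (0, 1, 0)`. -/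
def yStar : E 3 := !₂[0, 1, 0]

/-- Example 3.2 of the paper. For the relaxed MPCaC problem
in `ℝ³` with `f(x) = x₁`, `g(x) = (1 − x₁)³ + x₃² ≤ 0`, no equality
constraints and `α = 2`, the pair `(x*, y*) = ((1,0,0), (0,1,0))` is
`AW`-stationary. -/
def pr3 (i : Fin 3) : E 3 →L[ℝ] ℝ := EuclideanSpace.proj i

lemma grad_fEx (x : E 3) : gradient fEx x = EuclideanSpace.single 0 1 := by
  apply HasGradientAt.gradient
  rw [hasGradientAt_iff_hasFDerivAt]
  refine HasFDerivAt.congr_fderiv (pr3 0).hasFDerivAt ?_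
  ext w
  simp [pr3, fEx, InnerProductSpace.toDual_apply_apply, EuclideanSpace.inner_single_left]

lemma grad_gEx (x : E 3) : gradient (fun z => gEx z 0) x
    = EuclideanSpace.single 0 (-3*(1 - x 0)^2) + EuclideanSpace.single 2 (2 * x 2) := by
  apply HasGradientAt.gradient
  rw [hasGradientAt_iff_hasFDerivAt]
  have h1 : HasFDerivAt (fun z : E 3 => 1 - z 0) (-(pr3 0)) x :=
    (pr3 0).hasFDerivAt.const_sub 1
  have h2 := (hasDerivAt_pow 3 (1 - x 0)).comp_hasFDerivAt x h1
  have h3 := (hasDerivAt_pow 2 (x 2)).comp_hasFDerivAt x (pr3 2).hasFDerivAt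
  refine HasFDerivAt.congr_fderiv (h2.add h3) ?_
  ext w
  simp [pr3, gEx, InnerProductSpace.toDual_apply_apply, EuclideanSpace.inner_single_left]

theorem example_AWStat : AWStat fEx gEx hEx 2 xStar yStar := by
  have hne : ∀ k : ℕ, ((k : ℝ) + 1) ≠ 0 := fun k => by positivity
  set xk : ℕ → E 3 := fun k => xStar + (-(1/((k:ℝ)+1))) • EuclideanSpace.single 0 1 with hxk
  have hx0 : ∀ k, xk k 0 = 1 - 1/((k:ℝ)+1) := by
    intro k
    simp [hxk, xStar, EuclideanSpace.single_apply]
    ring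
  have hx1 : ∀ k, xk k 1 = 0 := by
    intro k; simp [hxk, xStar, EuclideanSpace.single_apply]
  have hx2 : ∀ k, xk k 2 = 0 := by
    intro k; simp [hxk, xStar, EuclideanSpace.single_apply]
  refine ⟨xk, fun _ => yStar, fun k _ => ((k:ℝ)+1)^2/3, fun _ _ => 0, fun _ => 0,
    fun _ => 0, fun _ _ => 0, fun _ _ => 0, ?_, ?_, ?_, ?_, ?_, ?_, ?_, ?_, ?_, ?_, ?_, ?_⟩
  · intro k i; positivity
  · intro k; exact le_refl 0
  · intro k i; exact le_refl 0
  · -- xk → xStar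
    have h1 : Tendsto (fun k : ℕ => -(1/((k:ℝ)+1))) atTop (𝓝 0) := by
      simpa using (tendsto_one_div_add_atTop_nhds_zero_nat (𝕜 := ℝ)).neg
    have h2 := (h1.smul_const (EuclideanSpace.single (0 : Fin 3) (1:ℝ))).const_add xStar
    rw [hxk]
    simpa using h2
  · exact tendsto_const_nhds
  · -- gradLx + lG → 0
    have hzero : ∀ k : ℕ, gradLx fEx gEx hEx (xk k) (fun _ => ((k:ℝ)+1)^2/3) (fun _ => 0)
        + (0 : E 3) = 0 := by
      intro k
      rw [add_zero]
      unfold gradLx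
      rw [grad_fEx, Fin.sum_univ_one, grad_gEx]
      rw [Finset.univ_eq_empty, Finset.sum_empty, add_zero]
      rw [hx0 k, hx2 k]
      ext i
      simp [EuclideanSpace.single_apply]
      rcases eq_or_ne i 0 with hi | hi
      · simp only [hi, if_pos rfl, if_true]
        field_simp
        norm_num
      · simp [hi]
    exact Tendsto.congr (fun k => (hzero k).symm) tendsto_const_nhds
  · -- multiplier equation for y
    have : (fun (_ : ℕ) (i : Fin 3) => -(0:ℝ) - 0 + 0) = fun _ => (0 : Fin 3 → ℝ) := by
      funext k i; simp
    rw [this]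
    exact tendsto_const_nhds
  · -- min(-g, lg) → 0
    intro i
    have hg : ∀ k : ℕ, gEx (xk k) i = (1/((k:ℝ)+1))^3 := by
      intro k
      simp only [gEx, hx0 k, hx2 k]
      ring
    have heq : ∀ k : ℕ, min (-(gEx (xk k) i)) (((k:ℝ)+1)^2/3) = -((1/((k:ℝ)+1))^3) := by
      intro k
      rw [hg k]
      apply min_eq_left
      have h1 : (0:ℝ) ≤ (1/((k:ℝ)+1))^3 := by positivity
      have h2 : (0:ℝ) ≤ ((k:ℝ)+1)^2/3 := by positivity
      linarith
    rw [funext heq]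
    have := ((tendsto_one_div_add_atTop_nhds_zero_nat (𝕜 := ℝ)).pow 3).neg
    simpa using this
  · -- min(-theta, lθ) → 0
    have : ∀ k : ℕ, min (-(theta 2 yStar)) (0:ℝ) = 0 := by
      intro k
      have : theta 2 yStar = 0 := by
        simp [theta, yStar, Fin.sum_univ_three]
        norm_num
      rw [this]
      simp
    simpa [this 0] using (tendsto_const_nhds : Tendsto (fun _ : ℕ => (0:ℝ)) atTop (𝓝 0))
  · -- min |x| |lG| → 0
    intro i
    have : ∀ k : ℕ, min |xk k i| |(0 : E 3) i| = 0 := by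
      intro k
      simp
    rw [funext this]
    exact tendsto_const_nhds
  · -- min y |lH| → 0
    intro i
    have : min (yStar i) |(0:ℝ)| = 0 := by
      have : (0:ℝ) ≤ yStar i := by
        fin_cases i <;> simp [yStar]
      simp [min_eq_right this]
    rw [show (fun _ : ℕ => min (yStar i) |(0:ℝ)|) = fun _ => (0:ℝ) from funext fun _ => this]
    exact tendsto_const_nhds
  · -- min (1 - y) lH' → 0
    intro i
    have : min (1 - yStar i) (0:ℝ) = 0 := by
      have : yStar i ≤ 1 := by
        fin_cases i <;> simp [yStar]
      have h2 : (0:ℝ) ≤ 1 - yStar i := by linarith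
      simp [min_eq_right h2]
    rw [show (fun _ : ℕ => min (1 - yStar i) (0:ℝ)) = fun _ => (0:ℝ) from funext fun _ => this]
    exact tendsto_const_nhds
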